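/- Let Θ be a measurable space with a probability measure π and ℓ : Θ × Θ → [0,∞) a loss with measurable balls B(θ,r) = {θ' : ℓ(θ,θ') ≤ r}. Fix γ > 0 and θ ∈ Θ, and suppose r > 0 satisfies 0 < π(B(θ,2u)) ≤ e^{γu} π(B(θ,u)) for all u ≥ r, and additionally γ r ≥ 1. Then for every η > 0 and every integer J ≥ 0, ∫_{Θ \ B(θ, 2^J r)} exp(−(2+η)γ ℓ(θ,θ')) dπ(θ') ≤ (1 − e^{−η})^{−1} π(B(θ,r)) exp(−2^J η γ r). -/

import Mathlib

open MeasureTheory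

/-- Tail integral bound under the doubling condition: if `π(B(θ,2u)) ≤ e^{γu} π(B(θ,u)) > 0`
for all `u ≥ r` and `γr ≥ 1`, then for every `η > 0` and integer `J ≥ 0`,
`∫_{B(θ,2^J r)ᶜ} exp(−(2+η)γ ℓ(θ,θ')) dπ ≤ (1 − e^{−η})⁻¹ π(B(θ,r)) e^{−2^J ηγr}`. -/
theorem stmt4 {Θ : Type*} [MeasurableSpace Θ] (π : Measure Θ) [IsProbabilityMeasure π]
    (ℓ : Θ → Θ → ℝ) (hℓ : ∀ θ θ', 0 ≤ ℓ θ θ') (θ : Θ)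
    (hmeas : Measurable (fun θ' => ℓ θ θ'))
    (γ r : ℝ) (hγ : 0 < γ) (hr : 0 < r) (hγr : 1 ≤ γ * r)
    (hpos : ∀ u ≥ r, 0 < (π {θ' | ℓ θ θ' ≤ u}).toReal)
    (hdouble : ∀ u ≥ r,
      (π {θ' | ℓ θ θ' ≤ 2 * u}).toReal ≤ Real.exp (γ * u) * (π {θ' | ℓ θ θ' ≤ u}).toReal)
    (η : ℝ) (hη : 0 < η) (J : ℕ) :
    ∫ θ' in {θ' | ℓ θ θ' ≤ 2 ^ J * r}ᶜ, Real.exp (-((2 + η) * γ * ℓ θ θ')) ∂π ≤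
      (1 - Real.exp (-η))⁻¹ * (π {θ' | ℓ θ θ' ≤ r}).toReal *
        Real.exp (-(2 ^ J * η * γ * r)) := by
  classical
  set f : Θ → ℝ := fun θ' => Real.exp (-((2 + η) * γ * ℓ θ θ')) with hf
  have hfmeas : Measurable f :=
    Real.measurable_exp.comp ((measurable_const.mul hmeas).neg)
  have hfint : Integrable f π := by
    refine (integrable_const (1:ℝ)).mono' hfmeas.aestronglyMeasurable ?_
    filter_upwards with x
    rw [Real.norm_eq_abs, abs_of_pos (Real.exp_pos _)]
    have harg : -((2 + η) * γ * ℓ θ x) ≤ 0 := by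
      have h0 : 0 ≤ (2 + η) * γ * ℓ θ x := mul_nonneg (mul_nonneg (by linarith) hγ.le) (hℓ θ x)
      linarith
    calc Real.exp (-((2 + η) * γ * ℓ θ x)) ≤ Real.exp 0 := Real.exp_le_exp.mpr harg
      _ = 1 := Real.exp_zero
  set A : ℕ → Set Θ :=
    fun k => (fun θ' => ℓ θ θ') ⁻¹' Set.Ioc (2^(J+k)*r) (2^(J+k+1)*r) with hA
  have hAmeas : ∀ k, MeasurableSet (A k) := fun k => hmeas measurableSet_Ioc
  have hAdisj : Pairwise (Function.onFun Disjoint A) := by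
    intro i j hij
    wlog h : i < j generalizing i j
    · exact (this hij.symm (by omega)).symm
    · refine Set.disjoint_left.mpr ?_
      rintro x ⟨_, hx2⟩ ⟨hx3, _⟩
      have h2 : (2:ℝ)^(J+i+1) ≤ 2^(J+j) := by
        apply pow_le_pow_right₀ (by norm_num) (by omega)
      nlinarith [hr]
  have hUnion : {θ' | ℓ θ θ' ≤ 2 ^ J * r}ᶜ = ⋃ k, A k := by
    ext x
    simp only [Set.mem_compl_iff, Set.mem_setOf_eq, not_le, Set.mem_iUnion, hA,
      Set.mem_preimage, Set.mem_Ioc]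
    constructor
    · intro hx
      have hex : ∃ n, ℓ θ x ≤ 2^(J+n+1)*r := by
        obtain ⟨n, hn⟩ := pow_unbounded_of_one_lt (ℓ θ x / r) (by norm_num : (1:ℝ) < 2)
        refine ⟨n, ?_⟩
        have h1 : ℓ θ x < 2^n * r := by
          rw [div_lt_iff₀ hr] at hn; linarith
        have h2 : (2:ℝ)^n ≤ 2^(J+n+1) := pow_le_pow_right₀ (by norm_num) (by omega)
        nlinarith
      refine ⟨Nat.find hex, ?_, Nat.find_spec hex⟩
      rcases Nat.eq_zero_or_pos (Nat.find hex) with hk0 | hk0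
      · rw [hk0]; simpa using hx
      · have hmin := Nat.find_min hex (m := Nat.find hex - 1) (by omega)
        push_neg at hmin
        have hkk : J + (Nat.find hex - 1) + 1 = J + Nat.find hex := by omega
        rw [hkk] at hmin
        exact hmin
    · rintro ⟨k, hk1, _⟩
      have h2 : (2:ℝ)^J ≤ 2^(J+k) := pow_le_pow_right₀ (by norm_num) (by omega)
      nlinarith
  set C := (π {θ' | ℓ θ θ' ≤ r}).toReal with hC
  have hCnn : 0 ≤ C := ENNReal.toReal_nonneg
  have hdn : ∀ n : ℕ, (π {θ' | ℓ θ θ' ≤ 2^n * r}).toReal ≤ Real.exp (γ * r * (2^n - 1)) * C := by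
    intro n
    induction n with
    | zero => simp [hC]
    | succ n ih =>
      have h1 : (2:ℝ)^(n+1) * r = 2 * (2^n * r) := by ring
      have hpn : (1:ℝ) ≤ 2^n := by simpa using pow_le_pow_right₀ (by norm_num : (1:ℝ) ≤ 2) (Nat.zero_le n)
      have h2 : r ≤ 2^n * r := le_mul_of_one_le_left hr.le hpn
      rw [h1]
      calc (π {θ' | ℓ θ θ' ≤ 2 * (2^n*r)}).toReal
          ≤ Real.exp (γ * (2^n*r)) * (π {θ' | ℓ θ θ' ≤ 2^n*r}).toReal := hdouble _ h2
        _ ≤ Real.exp (γ * (2^n*r)) * (Real.exp (γ*r*(2^n - 1)) * C) :=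
            mul_le_mul_of_nonneg_left ih (Real.exp_pos _).le
        _ = Real.exp (γ * r * (2^(n+1) - 1)) * C := by
            rw [← mul_assoc, ← Real.exp_add]
            ring_nf
  have hlt : Real.exp (-η) < 1 := by
    rw [← Real.exp_zero]
    exact Real.exp_lt_exp.mpr (by linarith)
  have hsum : Summable (fun k : ℕ => (C * Real.exp (-(2^J * η * γ * r))) * Real.exp (-η) ^ k) :=
    (summable_geometric_of_lt_one (Real.exp_pos _).le hlt).mul_left _
  have hterm : ∀ k : ℕ, ∫ x in A k, f x ∂π ≤
      (C * Real.exp (-(2^J * η * γ * r))) * Real.exp (-η) ^ k := by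
    intro k
    have hsub : A k ⊆ {θ' | ℓ θ θ' ≤ 2^(J+k+1) * r} := fun x hx => hx.2
    have hπA : (π (A k)).toReal ≤ Real.exp (γ*r*(2^(J+k+1) - 1)) * C :=
      le_trans (ENNReal.toReal_mono (measure_ne_top π _) (measure_mono hsub)) (hdn (J+k+1))
    have hfle : ∀ x ∈ A k, f x ≤ Real.exp (-((2+η)*γ*(2^(J+k)*r))) := by
      intro x hx
      apply Real.exp_le_exp.mpr
      have h1 : 2^(J+k)*r ≤ ℓ θ x := le_of_lt hx.1
      have hc : (0:ℝ) ≤ (2+η)*γ := mul_nonneg (by linarith) hγ.le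
      nlinarith [mul_le_mul_of_nonneg_left h1 hc]
    have hexp : Real.exp (γ*r*(2^(J+k+1)-1)) * Real.exp (-((2+η)*γ*(2^(J+k)*r))) ≤
        Real.exp (-(2^J*η*γ*r)) * Real.exp (-η) ^ k := by
      rw [← Real.exp_nat_mul, ← Real.exp_add, ← Real.exp_add]
      apply Real.exp_le_exp.mpr
      have h2J : (2:ℝ)^J ≤ 2^(J+k) := pow_le_pow_right₀ (by norm_num) (by omega)
      have hk2 : (k:ℝ) ≤ 2^(J+k) - 2^J := by
        have h1 : (k:ℝ) + 1 ≤ 2^k := by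
          have := Nat.succ_le_of_lt ((Nat.lt_two_pow_self (n := k)))
          exact_mod_cast this
        have h2 : (2:ℝ)^(J+k) = 2^J * 2^k := pow_add 2 J k
        have h3 : (1:ℝ) ≤ 2^J := by simpa using pow_le_pow_right₀ (by norm_num : (1:ℝ) ≤ 2) (Nat.zero_le J)
        nlinarith [mul_nonneg (sub_nonneg.mpr h3) (by linarith : (0:ℝ) ≤ 2^k - 1)]
      have hps : (2:ℝ)^(J+k+1) = 2 * 2^(J+k) := by rw [pow_succ]; ring
      rw [hps]
      nlinarith [mul_nonneg (mul_nonneg hη.le (sub_nonneg.mpr hγr)) (sub_nonneg.mpr h2J),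
        mul_le_mul_of_nonneg_left hk2 hη.le, hγr, hr.le, hγ.le, hη.le]
    calc ∫ x in A k, f x ∂π
        ≤ ∫ _x in A k, Real.exp (-((2+η)*γ*(2^(J+k)*r))) ∂π :=
          setIntegral_mono_on hfint.integrableOn
            (integrableOn_const (measure_ne_top π _)) (hAmeas k) hfle
      _ = (π (A k)).toReal * Real.exp (-((2+η)*γ*(2^(J+k)*r))) := by
          rw [setIntegral_const, smul_eq_mul, measureReal_def]
      _ ≤ (Real.exp (γ*r*(2^(J+k+1)-1)) * C) * Real.exp (-((2+η)*γ*(2^(J+k)*r))) :=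
          mul_le_mul_of_nonneg_right hπA (Real.exp_pos _).le
      _ = C * (Real.exp (γ*r*(2^(J+k+1)-1)) * Real.exp (-((2+η)*γ*(2^(J+k)*r)))) := by ring
      _ ≤ C * (Real.exp (-(2^J*η*γ*r)) * Real.exp (-η) ^ k) :=
          mul_le_mul_of_nonneg_left hexp hCnn
      _ = (C * Real.exp (-(2^J * η * γ * r))) * Real.exp (-η) ^ k := by ring
  have hsumL : Summable (fun k : ℕ => ∫ x in A k, f x ∂π) :=
    Summable.of_nonneg_of_le
      (fun k => setIntegral_nonneg (hAmeas k) (fun x _ => (Real.exp_pos _).le)) hterm hsum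
  calc ∫ θ' in {θ' | ℓ θ θ' ≤ 2 ^ J * r}ᶜ, f θ' ∂π
      = ∑' k, ∫ x in A k, f x ∂π := by
        rw [hUnion, integral_iUnion hAmeas hAdisj (hUnion ▸ hfint.integrableOn)]
    _ ≤ ∑' k, (C * Real.exp (-(2^J * η * γ * r))) * Real.exp (-η) ^ k :=
        Summable.tsum_le_tsum hterm hsumL hsum
    _ = (C * Real.exp (-(2^J * η * γ * r))) * (1 - Real.exp (-η))⁻¹ := by
        rw [tsum_mul_left, tsum_geometric_of_lt_one (Real.exp_pos _).le hlt]
    _ = (1 - Real.exp (-η))⁻¹ * C * Real.exp (-(2 ^ J * η * γ * r)) := by ring
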